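/- arXiv:1910.05980 — 2 statements merged into one kernel-verified Lean document; each statement's English description precedes it below -/
import Mathlib

section
/- For s > 0, the map φ ↦ F^{-1}(|ξ|^s F φ) is a bijective linear isomorphism of S_∞ onto itself, with inverse φ ↦ F^{-1}(|ξ|^{-s} F φ). -/
open MeasureTheory SchwartzMap ENNReal NNReal Filter Topology
noncomputable section

/-- Euclidean space ℝ^d. -/
abbrev Rd (d : ℕ) := EuclideanSpace ℝ (Fin d)

/-- φ ∈ S_∞ : all moments of the Schwartz function φ vanish. -/
def momentsVanish {d : ℕ} (φ : 𝓢(Rd d, ℂ)) : Prop :=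
  ∀ γ : Fin d → ℕ, ∫ x : Rd d, (∏ i, (x i : ℂ) ^ γ i) * φ x = 0

/-- The fractional Laplacian Δ^{s/2} f = F⁻¹(|ξ|^s F f). -/
def fracLapFun (d : ℕ) (s : ℝ) (f : Rd d → ℂ) : Rd d → ℂ :=
  FourierTransformInv.fourierInv (fun ξ => ((‖ξ‖ ^ s : ℝ) : ℂ) * FourierTransform.fourier f ξ)

/-- The Riesz potential I_s f = F⁻¹(|ξ|^{-s} F f). -/
def rieszFun (d : ℕ) (s : ℝ) (f : Rd d → ℂ) : Rd d → ℂ :=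
  FourierTransformInv.fourierInv (fun ξ => ((‖ξ‖ ^ (-s) : ℝ) : ℂ) * FourierTransform.fourier f ξ)

/-- The Mihlin–Hörmander symbol |ξ|^s (1+|ξ|²)^{-M}. -/
def mhSymbol (d : ℕ) (s M : ℝ) (ξ : Rd d) : ℝ := ‖ξ‖ ^ s * (1 + ‖ξ‖ ^ 2) ^ (-M)

/-- g_a(x) = |a-x|^{ν-d} - |x|^{ν-d}. -/
def gFun (d : ℕ) (ν : ℝ) (a x : Rd d) : ℝ := ‖a - x‖ ^ (ν - (d : ℝ)) - ‖x‖ ^ (ν - (d : ℝ))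

/-- First finite difference D_h f(x) = f(x+h) - f(x). -/
def fdiff {d : ℕ} (h : Rd d) (f : Rd d → ℂ) : Rd d → ℂ := fun x => f (x + h) - f x

/-- Iterated finite difference D_h^k. -/
def fdiffIter {d : ℕ} (h : Rd d) (k : ℕ) (f : Rd d → ℂ) : Rd d → ℂ := (fdiff h)^[k] f

/-- f is a polynomial on ℝ^d of total degree at most m. -/
def IsPolyDeg {d : ℕ} (m : ℕ) (f : Rd d → ℂ) : Prop :=
  ∃ c : (Fin d → ℕ) → ℂ, ∀ x, f x =
    ∑ γ ∈ Finset.univ.filter (fun γ : Fin d → Fin (m + 1) => ∑ i, (γ i : ℕ) ≤ m),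
      c (fun i => (γ i : ℕ)) * ∏ i, (x i : ℂ) ^ (γ i : ℕ)

/-- The j-th Riesz transform, R_j f = F⁻¹(-i ξ_j |ξ|⁻¹ F f). -/
def rieszT (d : ℕ) (j : Fin d) (f : Rd d → ℂ) : Rd d → ℂ :=
  FourierTransformInv.fourierInv
    (fun ξ => (-Complex.I * ((ξ j : ℝ) : ℂ) / ((‖ξ‖ : ℝ) : ℂ)) * FourierTransform.fourier f ξ)

/-- Δ^{(s-1)/2} ∂_j f = F⁻¹(2πi ξ_j |ξ|^{s-1} F f). -/
def fracLapGrad (d : ℕ) (s : ℝ) (j : Fin d) (f : Rd d → ℂ) : Rd d → ℂ :=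
  FourierTransformInv.fourierInv (fun ξ =>
    (2 * Real.pi * Complex.I * ((ξ j : ℝ) : ℂ)) * ((‖ξ‖ ^ (s - 1) : ℝ) : ℂ) *
      FourierTransform.fourier f ξ)

/-- Partial derivative in direction e_i. -/
def pd {d : ℕ} (i : Fin d) (g : Rd d → ℂ) : Rd d → ℂ :=
  fun x => fderiv ℝ g x (EuclideanSpace.single i (1 : ℝ))

/-- Multi-index partial derivative ∂^α. -/
def pdMulti {d : ℕ} (α : Fin d → ℕ) (g : Rd d → ℂ) : Rd d → ℂ :=
  ((List.finRange d).foldr (fun i acc => (pd i)^[α i] ∘ acc) id) g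

/-- Littlewood–Paley piece M_j u = F⁻¹(η(2^{-j}·) F u). -/
def LPpiece (d : ℕ) (η : Rd d → ℂ) (j : ℤ) (u : Rd d → ℂ) : Rd d → ℂ :=
  FourierTransformInv.fourierInv (fun ξ => η (((2 : ℝ) ^ (-j) : ℝ) • ξ) * FourierTransform.fourier u ξ)

/-- Taylor polynomial of degree m of f centered at y, evaluated at x. -/
def taylorPoly {d : ℕ} (m : ℕ) (f : Rd d → ℂ) (y x : Rd d) : ℂ :=
  ∑ i ∈ Finset.range (m + 1),
    ((i.factorial : ℂ))⁻¹ * iteratedFDeriv ℝ i f y (fun _ => x - y)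

open FourierTransform RealInnerProductSpace
open scoped ContDiff

variable {d : ℕ}

/-- Flat Schwartz-type class. -/
def FS {F : Type} [NormedAddCommGroup F] [NormedSpace ℝ F] (G : Rd d → F) : Prop :=
  ContDiff ℝ ∞ G ∧
  (∀ n N : ℕ, ∃ C : ℝ, 0 ≤ C ∧ ∀ x : Rd d, ‖x‖ ≤ 1 → ‖iteratedFDeriv ℝ n G x‖ ≤ C * ‖x‖ ^ N) ∧
  (∀ k n : ℕ, ∃ C : ℝ, ∀ x : Rd d, ‖x‖ ^ k * ‖iteratedFDeriv ℝ n G x‖ ≤ C)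

/-- A smooth function all of whose derivatives vanish at 0 satisfies bounds
`‖u x‖ ≤ C * ‖x‖ ^ N` on the unit ball. -/
theorem fb_fun (N : ℕ) :
    ∀ {F : Type} [NormedAddCommGroup F] [NormedSpace ℝ F] (u : Rd d → F),
      ContDiff ℝ ∞ u → (∀ k, iteratedFDeriv ℝ k u 0 = 0) →
      ∃ C : ℝ, 0 ≤ C ∧ ∀ x : Rd d, ‖x‖ ≤ 1 → ‖u x‖ ≤ C * ‖x‖ ^ N := by
  induction N with
  | zero =>
    intro F _ _ u hu _
    obtain ⟨C, hC⟩ := (isCompact_closedBall (0 : Rd d) 1).exists_bound_of_continuousOn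
      hu.continuous.continuousOn
    refine ⟨max C 0, le_max_right _ _, fun x hx => ?_⟩
    have hb : ‖u x‖ ≤ max C 0 :=
      (hC x (by simpa [Metric.mem_closedBall, dist_zero_right] using hx)).trans (le_max_left _ _)
    simpa [pow_zero] using hb
  | succ N ih =>
    intro F _ _ u hu hflat
    obtain ⟨C, hC0, hC⟩ := ih (fderiv ℝ u) (hu.fderiv_right (by simp))
      (fun k => by
        have : ‖iteratedFDeriv ℝ k (fderiv ℝ u) 0‖ = ‖iteratedFDeriv ℝ (k+1) u 0‖ :=
          norm_iteratedFDeriv_fderiv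
        rw [hflat (k+1)] at this
        simpa using this)
    refine ⟨C, hC0, fun x hx => ?_⟩
    have hu0 : u 0 = 0 := by
      have h := hflat 0
      have : ‖iteratedFDeriv ℝ 0 u 0‖ = ‖u 0‖ := norm_iteratedFDeriv_zero
      rw [h] at this
      simpa using this.symm
    have key : ‖u x - u 0‖ ≤ (C * ‖x‖ ^ N) * ‖x - 0‖ := by
      apply (convex_closedBall (0 : Rd d) ‖x‖).norm_image_sub_le_of_norm_fderiv_le
        (fun y _ => (hu.differentiable (by simp)) y)
        (fun y hy => ?_) (by simp) (by simp)
      have hy1 : ‖y‖ ≤ 1 := le_trans (by simpa using hy) hx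
      calc ‖fderiv ℝ u y‖ ≤ C * ‖y‖ ^ N := hC y hy1
        _ ≤ C * ‖x‖ ^ N := by
            apply mul_le_mul_of_nonneg_left (pow_le_pow_left₀ (norm_nonneg _) (by simpa using hy) N) hC0
    rw [hu0, sub_zero, sub_zero] at key
    calc ‖u x‖ ≤ C * ‖x‖ ^ N * ‖x‖ := key
      _ = C * ‖x‖ ^ (N+1) := by ring

/-- Derivative version. -/
theorem fb_deriv (n : ℕ) :
    ∀ {F : Type} [NormedAddCommGroup F] [NormedSpace ℝ F] (u : Rd d → F),
      ContDiff ℝ ∞ u → (∀ k, iteratedFDeriv ℝ k u 0 = 0) →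
      ∀ N : ℕ, ∃ C : ℝ, 0 ≤ C ∧ ∀ x : Rd d, ‖x‖ ≤ 1 → ‖iteratedFDeriv ℝ n u x‖ ≤ C * ‖x‖ ^ N := by
  induction n with
  | zero =>
    intro F _ _ u hu hflat N
    obtain ⟨C, h0, hC⟩ := fb_fun N u hu hflat
    refine ⟨C, h0, fun x hx => ?_⟩
    simpa [norm_iteratedFDeriv_zero] using hC x hx
  | succ n ih =>
    intro F _ _ u hu hflat N
    obtain ⟨C, h0, hC⟩ := ih (fderiv ℝ u) (hu.fderiv_right (by simp))
      (fun k => by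
        have : ‖iteratedFDeriv ℝ k (fderiv ℝ u) 0‖ = ‖iteratedFDeriv ℝ (k+1) u 0‖ :=
          norm_iteratedFDeriv_fderiv
        rw [hflat (k+1)] at this
        simpa using this) N
    refine ⟨C, h0, fun x hx => ?_⟩
    rw [← norm_iteratedFDeriv_fderiv]
    exact hC x hx

theorem FS.flat {F : Type} [NormedAddCommGroup F] [NormedSpace ℝ F] {G : Rd d → F}
    (hG : FS G) : ∀ n, iteratedFDeriv ℝ n G 0 = 0 := by
  intro n
  obtain ⟨C, _, hC⟩ := hG.2.1 n 1
  have := hC 0 (by simp)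
  simpa using norm_le_zero_iff.1 (by simpa using this)

theorem FS.zero_val {F : Type} [NormedAddCommGroup F] [NormedSpace ℝ F] {G : Rd d → F}
    (hG : FS G) : G 0 = 0 := by
  have h := hG.flat 0
  have : ‖iteratedFDeriv ℝ 0 G 0‖ = ‖G 0‖ := norm_iteratedFDeriv_zero
  rw [h] at this
  simpa using this.symm

theorem FS.mk' {F : Type} [NormedAddCommGroup F] [NormedSpace ℝ F] {G : Rd d → F}
    (h1 : ContDiff ℝ ∞ G) (h2 : ∀ k, iteratedFDeriv ℝ k G 0 = 0)
    (h3 : ∀ k n : ℕ, ∃ C : ℝ, ∀ x : Rd d, ‖x‖ ^ k * ‖iteratedFDeriv ℝ n G x‖ ≤ C) :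
    FS G :=
  ⟨h1, fun n N => fb_deriv n G h1 h2 N, h3⟩

theorem FS.fderiv' {F : Type} [NormedAddCommGroup F] [NormedSpace ℝ F] {G : Rd d → F}
    (hG : FS G) : FS (fderiv ℝ G) := by
  refine ⟨hG.1.fderiv_right (by simp), fun n N => ?_, fun k n => ?_⟩
  · obtain ⟨C, h0, hC⟩ := hG.2.1 (n+1) N
    exact ⟨C, h0, fun x hx => by rw [norm_iteratedFDeriv_fderiv]; exact hC x hx⟩
  · obtain ⟨C, hC⟩ := hG.2.2 k (n+1)
    exact ⟨C, fun x => by rw [norm_iteratedFDeriv_fderiv]; exact hC x⟩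

theorem clm_deriv_bound {E F : Type} [NormedAddCommGroup E] [NormedSpace ℝ E]
    [NormedAddCommGroup F] [NormedSpace ℝ F] (L : E →L[ℝ] F) (i : ℕ) (x : E) :
    ‖iteratedFDeriv ℝ i (⇑L) x‖ ≤ ‖L‖ * (1 + ‖x‖) := by
  have h1x : (0:ℝ) ≤ 1 + ‖x‖ := by positivity
  match i with
  | 0 =>
    rw [norm_iteratedFDeriv_zero]
    calc ‖L x‖ ≤ ‖L‖ * ‖x‖ := L.le_opNorm x
      _ ≤ ‖L‖ * (1 + ‖x‖) := by nlinarith [norm_nonneg L, norm_nonneg x]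
  | 1 =>
    have : ‖iteratedFDeriv ℝ 1 (⇑L) x‖ = ‖iteratedFDeriv ℝ 0 (fderiv ℝ (⇑L)) x‖ := by
      rw [norm_iteratedFDeriv_fderiv]
    rw [this, norm_iteratedFDeriv_zero, ContinuousLinearMap.fderiv]
    nlinarith [norm_nonneg L, norm_nonneg x]
  | (i+2) =>
    have h2 : ‖iteratedFDeriv ℝ (i+2) (⇑L) x‖ = ‖iteratedFDeriv ℝ (i+1) (fderiv ℝ (⇑L)) x‖ := by
      rw [norm_iteratedFDeriv_fderiv]
    have h3 : fderiv ℝ (⇑L) = fun _ => L := by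
      funext y; exact L.fderiv
    rw [h2, h3, iteratedFDeriv_const_of_ne (by omega)]
    simp
    positivity

theorem bilinear_FS {E F G : Type} [NormedAddCommGroup E] [NormedSpace ℝ E]
    [NormedAddCommGroup F] [NormedSpace ℝ F] [NormedAddCommGroup G] [NormedSpace ℝ G]
    (B : E →L[ℝ] F →L[ℝ] G) {f : Rd d → E} {g : Rd d → F}
    (hf : ContDiff ℝ ∞ f) {A : ℝ} (hA : 0 ≤ A)
    (hfb : ∀ (i : ℕ) (x : Rd d), ‖iteratedFDeriv ℝ i f x‖ ≤ A * (1 + ‖x‖))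
    (hg : FS g) : FS (fun x => B (f x) (g x)) := by
  have hsm : ContDiff ℝ ∞ (fun x => B (f x) (g x)) :=
    (B.contDiff.comp hf).clm_apply hg.1
  have hkey : ∀ (n : ℕ) (x : Rd d), ‖iteratedFDeriv ℝ n (fun y => B (f y) (g y)) x‖ ≤
      ‖B‖ * ∑ i ∈ Finset.range (n + 1),
        (n.choose i : ℝ) * ‖iteratedFDeriv ℝ i f x‖ * ‖iteratedFDeriv ℝ (n - i) g x‖ :=
    fun n x => B.norm_iteratedFDeriv_le_of_bilinear hf hg.1 x (by exact_mod_cast le_top)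
  refine ⟨hsm, fun n N => ?_, fun k n => ?_⟩
  · choose Cg hCg0 hCg using fun i => hg.2.1 i N
    refine ⟨‖B‖ * ∑ i ∈ Finset.range (n + 1), (n.choose i : ℝ) * (A * 2) * Cg (n - i),
      mul_nonneg (norm_nonneg B) (Finset.sum_nonneg fun i _ => by
        have := hCg0 (n - i); positivity), fun x hx => ?_⟩
    calc ‖iteratedFDeriv ℝ n (fun y => B (f y) (g y)) x‖
        ≤ ‖B‖ * ∑ i ∈ Finset.range (n + 1),
            (n.choose i : ℝ) * ‖iteratedFDeriv ℝ i f x‖ * ‖iteratedFDeriv ℝ (n - i) g x‖ :=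
          hkey n x
      _ ≤ ‖B‖ * ∑ i ∈ Finset.range (n + 1),
            (n.choose i : ℝ) * (A * 2) * (Cg (n - i) * ‖x‖ ^ N) := by
          apply mul_le_mul_of_nonneg_left _ (norm_nonneg B)
          apply Finset.sum_le_sum
          intro i _
          have hb1 : ‖iteratedFDeriv ℝ i f x‖ ≤ A * 2 := by
            have := hfb i x
            nlinarith [norm_nonneg x]
          have hb2 : ‖iteratedFDeriv ℝ (n - i) g x‖ ≤ Cg (n - i) * ‖x‖ ^ N := hCg (n - i) x hx
          have h1 : (0:ℝ) ≤ (n.choose i : ℝ) := by positivity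
          have h4 : (0:ℝ) ≤ ‖iteratedFDeriv ℝ (n-i) g x‖ := norm_nonneg _
          exact mul_le_mul (mul_le_mul_of_nonneg_left hb1 h1) hb2 h4
            (mul_nonneg h1 (by linarith))
      _ = (‖B‖ * ∑ i ∈ Finset.range (n + 1), (n.choose i : ℝ) * (A * 2) * Cg (n - i)) * ‖x‖ ^ N := by
          have hsum : ∑ i ∈ Finset.range (n + 1),
              (n.choose i : ℝ) * (A * 2) * (Cg (n - i) * ‖x‖ ^ N)
              = (∑ i ∈ Finset.range (n + 1), (n.choose i : ℝ) * (A * 2) * Cg (n - i)) * ‖x‖ ^ N := by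
            rw [Finset.sum_mul]
            exact Finset.sum_congr rfl (fun i _ => by ring)
          rw [hsum, ← mul_assoc]
  · choose C1 hC1 using fun j => hg.2.2 k j
    choose C2 hC2 using fun j => hg.2.2 (k+1) j
    refine ⟨‖B‖ * ∑ i ∈ Finset.range (n + 1),
      (n.choose i : ℝ) * A * (C1 (n - i) + C2 (n - i)), fun x => ?_⟩
    have expand : ‖x‖ ^ k * ‖iteratedFDeriv ℝ n (fun y => B (f y) (g y)) x‖ ≤
        ‖B‖ * ∑ i ∈ Finset.range (n + 1),
          (n.choose i : ℝ) * ‖iteratedFDeriv ℝ i f x‖ *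
            (‖x‖ ^ k * ‖iteratedFDeriv ℝ (n - i) g x‖) := by
      have := mul_le_mul_of_nonneg_left (hkey n x) (pow_nonneg (norm_nonneg x) k)
      calc ‖x‖ ^ k * ‖iteratedFDeriv ℝ n (fun y => B (f y) (g y)) x‖
          ≤ ‖x‖ ^ k * (‖B‖ * ∑ i ∈ Finset.range (n + 1),
            (n.choose i : ℝ) * ‖iteratedFDeriv ℝ i f x‖ * ‖iteratedFDeriv ℝ (n - i) g x‖) := this
        _ = ‖B‖ * ∑ i ∈ Finset.range (n + 1),
            (n.choose i : ℝ) * ‖iteratedFDeriv ℝ i f x‖ *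
              (‖x‖ ^ k * ‖iteratedFDeriv ℝ (n - i) g x‖) := by
            rw [Finset.mul_sum, Finset.mul_sum, Finset.mul_sum]
            apply Finset.sum_congr rfl
            intro i _
            ring
    apply expand.trans
    apply mul_le_mul_of_nonneg_left _ (norm_nonneg B)
    apply Finset.sum_le_sum
    intro i _
    have hfi := hfb i x
    have e1 : ‖x‖ ^ k * ‖iteratedFDeriv ℝ (n-i) g x‖ ≤ C1 (n - i) := hC1 (n-i) x
    have e2 : ‖x‖ ^ (k+1) * ‖iteratedFDeriv ℝ (n-i) g x‖ ≤ C2 (n - i) := hC2 (n-i) x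
    have key : ‖iteratedFDeriv ℝ i f x‖ * (‖x‖ ^ k * ‖iteratedFDeriv ℝ (n-i) g x‖) ≤
        A * (C1 (n - i) + C2 (n - i)) := by
      have hgk : (0:ℝ) ≤ ‖x‖ ^ k * ‖iteratedFDeriv ℝ (n-i) g x‖ := by positivity
      calc ‖iteratedFDeriv ℝ i f x‖ * (‖x‖ ^ k * ‖iteratedFDeriv ℝ (n-i) g x‖)
          ≤ (A * (1 + ‖x‖)) * (‖x‖ ^ k * ‖iteratedFDeriv ℝ (n-i) g x‖) :=
            mul_le_mul_of_nonneg_right hfi hgk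
        _ = A * (‖x‖ ^ k * ‖iteratedFDeriv ℝ (n-i) g x‖
              + ‖x‖ ^ (k+1) * ‖iteratedFDeriv ℝ (n-i) g x‖) := by ring
        _ ≤ A * (C1 (n - i) + C2 (n - i)) := by
            apply mul_le_mul_of_nonneg_left _ hA
            exact add_le_add e1 e2
    calc (n.choose i : ℝ) * ‖iteratedFDeriv ℝ i f x‖ * (‖x‖ ^ k * ‖iteratedFDeriv ℝ (n-i) g x‖)
        = (n.choose i : ℝ) * (‖iteratedFDeriv ℝ i f x‖ * (‖x‖ ^ k * ‖iteratedFDeriv ℝ (n-i) g x‖)) := by ring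
      _ ≤ (n.choose i : ℝ) * (A * (C1 (n - i) + C2 (n - i))) :=
          mul_le_mul_of_nonneg_left key (by positivity)
      _ = (n.choose i : ℝ) * A * (C1 (n - i) + C2 (n - i)) := by ring

theorem FS.inner' {F : Type} [NormedAddCommGroup F] [NormedSpace ℝ F] {G : Rd d → F}
    (hG : FS G) : FS (fun x => (ContinuousLinearMap.smulRightL ℝ (Rd d) F) (innerSL ℝ x) (G x)) := by
  apply bilinear_FS _ (innerSL ℝ : Rd d →L[ℝ] Rd d →L[ℝ] ℝ).contDiff
    (norm_nonneg (innerSL ℝ : Rd d →L[ℝ] Rd d →L[ℝ] ℝ)) (fun i x => clm_deriv_bound _ i x) hG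

theorem rpow_norm_sq (y : Rd d) (t : ℝ) : ((‖y‖ ^ 2 : ℝ)) ^ t = ‖y‖ ^ (2 * t) := by
  rw [← Real.rpow_natCast ‖y‖ 2, ← Real.rpow_mul (norm_nonneg y)]
  norm_num

theorem smulRight_smul_eq {E F : Type} [NormedAddCommGroup E] [NormedSpace ℝ E]
    [NormedAddCommGroup F] [NormedSpace ℝ F] (c : ℝ) (L : E →L[ℝ] ℝ) (v : F) :
    (c • L).smulRight v = c • (L.smulRight v) := by
  ext y
  simp [mul_smul]

theorem smulRightL_eq {E F : Type} [NormedAddCommGroup E] [NormedSpace ℝ E]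
    [NormedAddCommGroup F] [NormedSpace ℝ F] (c : E →L[ℝ] ℝ) (f : F) :
    (ContinuousLinearMap.smulRightL ℝ E F) c f = c.smulRight f := rfl

theorem hasFDerivAt_H {F : Type} [NormedAddCommGroup F] [NormedSpace ℝ F] (r : ℝ)
    {G : Rd d → F} (hG : ContDiff ℝ ∞ G) {x : Rd d} (hx : x ≠ 0) :
    HasFDerivAt (fun y : Rd d => ‖y‖ ^ r • G y)
      ((‖x‖ ^ r) • _root_.fderiv ℝ G x +
        r • ((‖x‖ ^ (r - 2)) •
          (ContinuousLinearMap.smulRightL ℝ (Rd d) F) (innerSL ℝ x) (G x))) x := by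
  have hnx : ‖x‖ ≠ 0 := norm_ne_zero_iff.2 hx
  have hq : HasFDerivAt (fun y : Rd d => ‖y‖ ^ 2) (2 • (innerSL ℝ x)) x := by
    have := (hasFDerivAt_id x).norm_sq
    simpa using this
  have hw : HasFDerivAt (fun y : Rd d => (‖y‖ ^ 2 : ℝ) ^ (r / 2))
      ((r / 2 * (‖x‖ ^ 2 : ℝ) ^ (r / 2 - 1)) • (2 • (innerSL ℝ x))) x :=
    hq.rpow_const (Or.inl (by positivity))
  have hfun : (fun y : Rd d => (‖y‖ ^ 2 : ℝ) ^ (r / 2)) = fun y : Rd d => ‖y‖ ^ r := by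
    funext y
    rw [rpow_norm_sq]
    congr 1
    ring
  rw [hfun] at hw
  have hG' : HasFDerivAt G (_root_.fderiv ℝ G x) x :=
    (hG.differentiable (by simp) x).hasFDerivAt
  have h2 := hw.smul hG'
  have e1 : ((‖x‖ ^ 2 : ℝ)) ^ (r / 2 - 1) = ‖x‖ ^ (r - 2) := by
    rw [rpow_norm_sq]
    congr 1
    ring
  refine h2.congr_fderiv ?_
  ext y
  simp only [ContinuousLinearMap.add_apply, ContinuousLinearMap.smul_apply,
    ContinuousLinearMap.smulRight_apply, smulRightL_eq,
    ContinuousLinearMap.coe_smul', Pi.smul_apply, e1, nsmul_eq_mul, smul_eq_mul]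
  module

theorem Hbound {F : Type} [NormedAddCommGroup F] [NormedSpace ℝ F] {G : Rd d → F}
    (hG : FS G) {r : ℝ} (hr : r ≠ 0) (m : ℕ) :
    ∃ C : ℝ, 0 ≤ C ∧ ∀ x : Rd d, ‖x‖ ≤ 1 → ‖(‖x‖ ^ r • G x)‖ ≤ C * ‖x‖ ^ m := by
  obtain ⟨C, hC0, hC⟩ := hG.2.1 0 (m + ⌈|r|⌉₊)
  refine ⟨C, hC0, fun x hx => ?_⟩
  rcases eq_or_ne x 0 with rfl | hx0
  · rw [norm_zero, Real.zero_rpow hr, zero_smul, norm_zero]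
    positivity
  · have hnx : (0:ℝ) < ‖x‖ := norm_pos_iff.2 hx0
    have hGx : ‖G x‖ ≤ C * ‖x‖ ^ (m + ⌈|r|⌉₊) := by
      have := hC x hx
      rwa [norm_iteratedFDeriv_zero] at this
    have h1 : ‖(‖x‖ ^ r • G x)‖ = ‖x‖ ^ r * ‖G x‖ := by
      rw [norm_smul, Real.norm_eq_abs, abs_of_nonneg (Real.rpow_nonneg (norm_nonneg x) r)]
    rw [h1]
    have h2 : ‖x‖ ^ r * ‖G x‖ ≤ ‖x‖ ^ r * (C * ‖x‖ ^ (m + ⌈|r|⌉₊)) :=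
      mul_le_mul_of_nonneg_left hGx (Real.rpow_nonneg (norm_nonneg x) r)
    have h3 : ‖x‖ ^ r * (C * ‖x‖ ^ (m + ⌈|r|⌉₊)) = C * ‖x‖ ^ (r + (m + ⌈|r|⌉₊ : ℕ)) := by
      rw [← Real.rpow_natCast ‖x‖ (m + ⌈|r|⌉₊), mul_left_comm, ← Real.rpow_add hnx]
    have h4 : ‖x‖ ^ (r + (m + ⌈|r|⌉₊ : ℕ)) ≤ ‖x‖ ^ (m : ℝ) := by
      apply Real.rpow_le_rpow_of_exponent_ge hnx hx
      have : |r| ≤ (⌈|r|⌉₊ : ℝ) := Nat.le_ceil _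
      have := neg_abs_le r
      push_cast
      linarith
    rw [Real.rpow_natCast] at h4
    calc ‖x‖ ^ r * ‖G x‖ ≤ C * ‖x‖ ^ (r + (m + ⌈|r|⌉₊ : ℕ)) := by rw [← h3]; exact h2
      _ ≤ C * ‖x‖ ^ m := mul_le_mul_of_nonneg_left h4 hC0

theorem Hdecay0 {F : Type} [NormedAddCommGroup F] [NormedSpace ℝ F] {G : Rd d → F}
    (hG : FS G) {r : ℝ} (hr : r ≠ 0) (k : ℕ) :
    ∃ C : ℝ, ∀ x : Rd d, ‖x‖ ^ k * ‖(‖x‖ ^ r • G x)‖ ≤ C := by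
  obtain ⟨C₁, hC₁0, hC₁⟩ := Hbound hG hr 0
  obtain ⟨C₂, hC₂⟩ := hG.2.2 (k + ⌈r⌉₊) 0
  refine ⟨max C₁ C₂, fun x => ?_⟩
  rcases le_or_gt ‖x‖ 1 with hx | hx
  · have h1 : ‖(‖x‖ ^ r • G x)‖ ≤ C₁ := by simpa using hC₁ x hx
    have h2 : ‖x‖ ^ k ≤ 1 := pow_le_one₀ (norm_nonneg x) hx
    calc ‖x‖ ^ k * ‖(‖x‖ ^ r • G x)‖ ≤ 1 * C₁ :=
        mul_le_mul h2 h1 (norm_nonneg _) zero_le_one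
      _ ≤ max C₁ C₂ := by simpa using le_max_left C₁ C₂
  · have hx0 : (0:ℝ) < ‖x‖ := lt_trans one_pos hx
    have h1 : ‖(‖x‖ ^ r • G x)‖ = ‖x‖ ^ r * ‖G x‖ := by
      rw [norm_smul, Real.norm_eq_abs, abs_of_nonneg (Real.rpow_nonneg (norm_nonneg x) r)]
    have h2 : ‖x‖ ^ r ≤ ‖x‖ ^ (⌈r⌉₊ : ℕ) := by
      rw [← Real.rpow_natCast ‖x‖ ⌈r⌉₊]
      exact Real.rpow_le_rpow_of_exponent_le hx.le (Nat.le_ceil r)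
    have hGx : ‖x‖ ^ (k + ⌈r⌉₊) * ‖G x‖ ≤ C₂ := by
      have := hC₂ x
      rwa [norm_iteratedFDeriv_zero] at this
    calc ‖x‖ ^ k * ‖(‖x‖ ^ r • G x)‖ = ‖x‖ ^ k * (‖x‖ ^ r * ‖G x‖) := by rw [h1]
      _ ≤ ‖x‖ ^ k * (‖x‖ ^ (⌈r⌉₊ : ℕ) * ‖G x‖) := by
          apply mul_le_mul_of_nonneg_left _ (by positivity)
          exact mul_le_mul_of_nonneg_right h2 (norm_nonneg _)
      _ = ‖x‖ ^ (k + ⌈r⌉₊) * ‖G x‖ := by rw [pow_add]; ring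
      _ ≤ C₂ := hGx
      _ ≤ max C₁ C₂ := le_max_right _ _

theorem hasFDerivAt_H_zero {F : Type} [NormedAddCommGroup F] [NormedSpace ℝ F]
    {G : Rd d → F} (hG : FS G) {r : ℝ} (hr : r ≠ 0) :
    HasFDerivAt (fun y : Rd d => ‖y‖ ^ r • G y) (0 : Rd d →L[ℝ] F) 0 := by
  obtain ⟨C, hC0, hC⟩ := Hbound hG hr 2
  rw [hasFDerivAt_iff_isLittleO_nhds_zero]
  rw [Asymptotics.isLittleO_iff]
  intro c hc
  have hev : ∀ᶠ y in 𝓝 (0 : Rd d), ‖y‖ ≤ min 1 (c / (C + 1)) := by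
    have hpos : 0 < min 1 (c / (C + 1)) := by
      apply lt_min one_pos
      positivity
    filter_upwards [Metric.ball_mem_nhds (0 : Rd d) hpos] with y hy
    rw [Metric.mem_ball, dist_zero_right] at hy
    exact hy.le
  filter_upwards [hev] with y hy
  have hy1 : ‖y‖ ≤ 1 := le_trans hy (min_le_left _ _)
  have hy2 : ‖y‖ ≤ c / (C + 1) := le_trans hy (min_le_right _ _)
  have h0 : ‖(0:Rd d)‖ ^ r • G 0 = 0 := by
    rw [hG.zero_val, smul_zero]
  simp only [zero_add, h0, sub_zero, ContinuousLinearMap.zero_apply, sub_zero]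
  have hC1 : (0:ℝ) < C + 1 := by linarith
  have h5 : C * (c / (C + 1)) ≤ c := by
    rw [mul_div_assoc', div_le_iff₀ hC1]
    nlinarith
  calc ‖(‖y‖ ^ r • G y)‖ ≤ C * ‖y‖ ^ 2 := hC y hy1
    _ = C * ‖y‖ * ‖y‖ := by ring
    _ ≤ C * (c / (C + 1)) * ‖y‖ := by
        apply mul_le_mul_of_nonneg_right _ (norm_nonneg y)
        exact mul_le_mul_of_nonneg_left hy2 hC0
    _ ≤ c * ‖y‖ := mul_le_mul_of_nonneg_right h5 (norm_nonneg y)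

theorem master (n : ℕ) :
    ∀ {F : Type} [NormedAddCommGroup F] [NormedSpace ℝ F] (r : ℝ) (G : Rd d → F), FS G →
      ContDiff ℝ n (fun x : Rd d => ‖x‖ ^ r • G x) ∧
      iteratedFDeriv ℝ n (fun x : Rd d => ‖x‖ ^ r • G x) 0 = 0 ∧
      (∀ k : ℕ, ∃ C : ℝ, ∀ x : Rd d,
        ‖x‖ ^ k * ‖iteratedFDeriv ℝ n (fun x : Rd d => ‖x‖ ^ r • G x) x‖ ≤ C) := by
  induction n with
  | zero =>
    intro F _ _ r G hG
    rcases eq_or_ne r 0 with rfl | hr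
    · simp only [Real.rpow_zero, one_smul]
      exact ⟨hG.1.of_le bot_le, hG.flat 0, fun k => hG.2.2 k 0⟩
    have h00 : (fun x : Rd d => ‖x‖ ^ r • G x) 0 = 0 := by
      simp only [norm_zero, Real.zero_rpow hr, zero_smul]
    refine ⟨?_, ?_, fun k => ?_⟩
    · rw [Nat.cast_zero, contDiff_zero]
      rw [continuous_iff_continuousAt]
      intro x
      rcases eq_or_ne x 0 with rfl | hx
      · have h00' : ‖(0:Rd d)‖ ^ r • G 0 = 0 := by
          rw [norm_zero, Real.zero_rpow hr, zero_smul]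
        rw [ContinuousAt, h00']
        obtain ⟨C, hC0, hC⟩ := Hbound hG hr 1
        apply squeeze_zero_norm'
        · have : ∀ᶠ y in 𝓝 (0:Rd d), ‖y‖ ≤ 1 := by
            filter_upwards [Metric.ball_mem_nhds (0 : Rd d) one_pos] with y hy
            rw [Metric.mem_ball, dist_zero_right] at hy
            exact hy.le
          filter_upwards [this] with y hy
          simpa using hC y hy
        · have : Continuous (fun y : Rd d => C * ‖y‖ ^ 1) := by continuity
          have h := this.tendsto (0 : Rd d)
          simpa using h
      · apply ContinuousAt.smul _ hG.1.continuous.continuousAt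
        have h1 : ContinuousAt (fun t : ℝ => t ^ r) ‖x‖ :=
          Real.continuousAt_rpow_const ‖x‖ r (Or.inl (norm_ne_zero_iff.2 hx))
        exact h1.comp continuous_norm.continuousAt
    · have h := norm_iteratedFDeriv_zero (𝕜 := ℝ) (f := fun x : Rd d => ‖x‖ ^ r • G x) (x := 0)
      have h0' : ‖(0:Rd d)‖ ^ r • G 0 = 0 := by
        rw [norm_zero, Real.zero_rpow hr, zero_smul]
      rw [h0'] at h
      simpa using norm_le_zero_iff.1 (le_of_eq (by simpa using h))
    · obtain ⟨C, hC⟩ := Hdecay0 hG hr k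
      exact ⟨C, fun x => by rw [norm_iteratedFDeriv_zero]; exact hC x⟩
  | succ n ih =>
    intro F _ _ r G hG
    rcases eq_or_ne r 0 with rfl | hr
    · simp only [Real.rpow_zero, one_smul]
      exact ⟨hG.1.of_le (by exact_mod_cast le_top), hG.flat (n+1), fun k => hG.2.2 k (n+1)⟩
    set G₁ := fun x : Rd d => (ContinuousLinearMap.smulRightL ℝ (Rd d) F) (innerSL ℝ x) (G x) with hG₁def
    set G₂ := _root_.fderiv ℝ G with hG₂def
    have hG₁ : FS G₁ := hG.inner'
    have hG₂ : FS G₂ := hG.fderiv'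
    obtain ⟨ih₁c, ih₁f, ih₁d⟩ := ih (r - 2) G₁ hG₁
    obtain ⟨ih₂c, ih₂f, ih₂d⟩ := ih r G₂ hG₂
    set A := fun x : Rd d => ‖x‖ ^ r • G₂ x with hAdef
    set B := fun x : Rd d => ‖x‖ ^ (r - 2) • G₁ x with hBdef
    have hasD : ∀ x : Rd d, HasFDerivAt (fun y : Rd d => ‖y‖ ^ r • G y) (A x + r • B x) x := by
      intro x
      rcases eq_or_ne x 0 with rfl | hx
      · have hA0 : A 0 = 0 := by
          simp only [hAdef, norm_zero, Real.zero_rpow hr, zero_smul]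
        have hB0 : B 0 = 0 := by
          have : G₁ 0 = 0 := by
            simp only [hG₁def]
            rw [hG.zero_val]
            ext y
            simp [smulRightL_eq]
          simp only [hBdef, this, smul_zero]
        rw [hA0, hB0, smul_zero, add_zero]
        exact hasFDerivAt_H_zero hG hr
      · exact hasFDerivAt_H r hG.1 hx
    have hdiff : Differentiable ℝ (fun y : Rd d => ‖y‖ ^ r • G y) :=
      fun x => (hasD x).differentiableAt
    have hfd : _root_.fderiv ℝ (fun y : Rd d => ‖y‖ ^ r • G y) = fun x => A x + r • B x :=
      funext fun x => (hasD x).fderiv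
    have hAc : ContDiff ℝ n A := ih₂c
    have hBc : ContDiff ℝ n B := ih₁c
    have hABc : ContDiff ℝ n (fun x => A x + r • B x) := hAc.add (hBc.const_smul r)
    refine ⟨?_, ?_, ?_⟩
    · have hcast : ((n + 1 : ℕ) : WithTop ℕ∞) = (n : WithTop ℕ∞) + 1 := by push_cast; rfl
      rw [hcast, contDiff_succ_iff_fderiv]
      refine ⟨hdiff, by simp, ?_⟩
      rw [hfd]
      exact hABc
    · have h1 : ‖iteratedFDeriv ℝ (n+1) (fun y : Rd d => ‖y‖ ^ r • G y) 0‖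
          = ‖iteratedFDeriv ℝ n (fun x => A x + r • B x) 0‖ := by
        rw [← norm_iteratedFDeriv_fderiv, hfd]
      have h2 : iteratedFDeriv ℝ n (fun x => A x + r • B x) 0 = 0 := by
        have e : (fun x : Rd d => A x + r • B x) = A + r • B := rfl
        rw [e, iteratedFDeriv_add_apply (g := r • B) hAc.contDiffAt (hBc.const_smul r).contDiffAt,
          iteratedFDeriv_const_smul_apply hBc.contDiffAt, ih₂f, ih₁f, smul_zero, add_zero]
      rw [h2, norm_zero] at h1
      exact norm_eq_zero.1 h1
    · intro k
      obtain ⟨C₂, hC₂⟩ := ih₂d k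
      obtain ⟨C₁, hC₁⟩ := ih₁d k
      refine ⟨C₂ + |r| * C₁, fun x => ?_⟩
      have h1 : ‖iteratedFDeriv ℝ (n+1) (fun y : Rd d => ‖y‖ ^ r • G y) x‖
          = ‖iteratedFDeriv ℝ n (fun y => A y + r • B y) x‖ := by
        rw [← norm_iteratedFDeriv_fderiv, hfd]
      have hadd : iteratedFDeriv ℝ n (fun y => A y + r • B y) x
          = iteratedFDeriv ℝ n A x + r • iteratedFDeriv ℝ n B x := by
        have e : (fun y : Rd d => A y + r • B y) = A + r • B := rfl
        rw [e, iteratedFDeriv_add_apply (g := r • B) hAc.contDiffAt (hBc.const_smul r).contDiffAt,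
          iteratedFDeriv_const_smul_apply hBc.contDiffAt]
      have h2 : ‖iteratedFDeriv ℝ n (fun y => A y + r • B y) x‖
          ≤ ‖iteratedFDeriv ℝ n A x‖ + |r| * ‖iteratedFDeriv ℝ n B x‖ := by
        rw [hadd]
        refine (norm_add_le _ _).trans ?_
        rw [norm_smul, Real.norm_eq_abs]
      calc ‖x‖ ^ k * ‖iteratedFDeriv ℝ (n+1) (fun y : Rd d => ‖y‖ ^ r • G y) x‖
          = ‖x‖ ^ k * ‖iteratedFDeriv ℝ n (fun y => A y + r • B y) x‖ := by rw [h1]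
        _ ≤ ‖x‖ ^ k * (‖iteratedFDeriv ℝ n A x‖ + |r| * ‖iteratedFDeriv ℝ n B x‖) :=
            mul_le_mul_of_nonneg_left h2 (by positivity)
        _ = ‖x‖ ^ k * ‖iteratedFDeriv ℝ n A x‖
            + |r| * (‖x‖ ^ k * ‖iteratedFDeriv ℝ n B x‖) := by ring
        _ ≤ C₂ + |r| * C₁ := by
            have := hC₂ x
            have := hC₁ x
            have h3 : |r| * (‖x‖ ^ k * ‖iteratedFDeriv ℝ n B x‖) ≤ |r| * C₁ :=
              mul_le_mul_of_nonneg_left (hC₁ x) (abs_nonneg r)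
            linarith [hC₂ x]

theorem masterFS {F : Type} [NormedAddCommGroup F] [NormedSpace ℝ F] (r : ℝ)
    {G : Rd d → F} (hG : FS G) : FS (fun x : Rd d => ‖x‖ ^ r • G x) := by
  apply FS.mk'
  · exact contDiff_infty.2 fun n => (master n r G hG).1
  · exact fun n => (master n r G hG).2.1
  · exact fun k n => (master n r G hG).2.2 k

theorem fourier_at_zero (g : Rd d → ℂ) : FourierTransform.fourier g 0 = ∫ v, g v := by
  rw [Real.fourier_eq]
  simp

theorem momentEval (f : 𝓢(Rd d, ℂ)) (n : ℕ) (ι : Fin n → Fin d) :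
    iteratedFDeriv ℝ n (FourierTransform.fourier ⇑f) 0
        (fun j => EuclideanSpace.single (ι j) (1:ℝ))
      = (-(2 * Real.pi * Complex.I)) ^ n *
          ∫ x : Rd d, (∏ j, (x (ι j) : ℂ)) * f x := by
  have hint : ∀ (k : ℕ), (k : ℕ∞) ≤ (⊤ : ℕ∞) → Integrable (fun v : Rd d => ‖v‖ ^ k * ‖f v‖) :=
    fun k _ => f.integrable_pow_mul volume k
  have hderiv := Real.iteratedFDeriv_fourier (f := ⇑f) (N := ⊤) hint
    f.continuous.aestronglyMeasurable (le_top (a := (n : ℕ∞)))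
  have hP : Integrable (fun v : Rd d => VectorFourier.fourierPowSMulRight (innerSL ℝ) ⇑f v n) :=
    VectorFourier.integrable_fourierPowSMulRight _ (f.integrable_pow_mul volume n)
      f.continuous.aestronglyMeasurable
  rw [hderiv]
  rw [Real.fourier_continuousMultilinearMap_apply hP]
  rw [fourier_at_zero]
  have e1 : ∀ x : Rd d, VectorFourier.fourierPowSMulRight (innerSL ℝ) ⇑f x n
      (fun j => EuclideanSpace.single (ι j) (1:ℝ))
      = (-(2 * Real.pi * Complex.I)) ^ n • ((∏ j, (x (ι j) : ℂ)) * f x) := by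
    intro x
    rw [VectorFourier.fourierPowSMulRight_apply]
    have e2 : (∏ j, (innerSL ℝ) x (EuclideanSpace.single (ι j) (1:ℝ)))
        = ∏ j, x (ι j) := by
      apply Finset.prod_congr rfl
      intro j _
      simp [EuclideanSpace.inner_single_right]
    rw [e2]
    congr 1
    rw [Complex.real_smul]
    push_cast
    ring
  calc ∫ x : Rd d, VectorFourier.fourierPowSMulRight (innerSL ℝ) ⇑f x n
          (fun j => EuclideanSpace.single (ι j) (1:ℝ))
      = ∫ x : Rd d, (-(2 * Real.pi * Complex.I)) ^ n • ((∏ j, (x (ι j) : ℂ)) * f x) := by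
        apply integral_congr_ae
        filter_upwards with x
        exact e1 x
    _ = (-(2 * Real.pi * Complex.I)) ^ n * ∫ x : Rd d, (∏ j, (x (ι j) : ℂ)) * f x := by
        rw [integral_smul]
        rfl

theorem flat_of_moments (φ : 𝓢(Rd d, ℂ)) (hm : momentsVanish φ) (n : ℕ) :
    iteratedFDeriv ℝ n (FourierTransform.fourier ⇑φ) 0 = 0 := by
  classical
  set b : Module.Basis (Fin d) ℝ (Rd d) := (EuclideanSpace.basisFun (Fin d) ℝ).toBasis with hb
  have hbv : ∀ i, b i = EuclideanSpace.single i (1:ℝ) := by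
    intro i
    rw [hb, OrthonormalBasis.coe_toBasis, EuclideanSpace.basisFun_apply]
  have key : (iteratedFDeriv ℝ n (FourierTransform.fourier ⇑φ) 0).toMultilinearMap
      = (0 : ContinuousMultilinearMap ℝ (fun _ : Fin n => Rd d) ℂ).toMultilinearMap := by
    apply Module.Basis.ext_multilinear (fun _ => b)
    intro v
    have e0 : (fun i => b (v i)) = fun i => EuclideanSpace.single (v i) (1:ℝ) := by
      funext i; rw [hbv]
    show (iteratedFDeriv ℝ n (FourierTransform.fourier ⇑φ) 0) (fun i => b (v i)) = _
    rw [e0, momentEval φ n v]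
    have eprod : ∀ x : Rd d, (∏ j, (x (v j) : ℂ))
        = ∏ i, (x i : ℂ) ^ (Finset.univ.filter (fun j => v j = i)).card := by
      intro x
      rw [← Finset.prod_fiberwise' Finset.univ v (fun i => (x i : ℂ))]
      apply Finset.prod_congr rfl
      intro i _
      rw [Finset.prod_const]
    have : ∫ x : Rd d, (∏ j, (x (v j) : ℂ)) * φ x = 0 := by
      rw [show (fun x : Rd d => (∏ j, (x (v j) : ℂ)) * φ x)
          = fun x : Rd d => (∏ i, (x i : ℂ) ^ (Finset.univ.filter (fun j => v j = i)).card) * φ x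
          from funext fun x => by rw [eprod]]
      exact hm _
    rw [this, mul_zero]
    rfl
  exact ContinuousMultilinearMap.toMultilinearMap_injective key

theorem moments_of_flat (ψ : 𝓢(Rd d, ℂ))
    (hflat : ∀ n, iteratedFDeriv ℝ n (FourierTransform.fourier ⇑ψ) 0 = 0) :
    momentsVanish ψ := by
  intro γ
  classical
  set n := ∑ i, γ i with hn
  have hcard : Fintype.card (Σ i : Fin d, Fin (γ i)) = n := by
    simp [Fintype.card_sigma, hn]
  set e : (Σ i : Fin d, Fin (γ i)) ≃ Fin n := Fintype.equivFinOfCardEq hcard with he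
  set ι : Fin n → Fin d := fun j => (e.symm j).1 with hι
  have h0 := momentEval ψ n ι
  rw [hflat n] at h0
  have hLHS : (0 : ContinuousMultilinearMap ℝ (fun _ : Fin n => Rd d) ℂ)
      (fun j => EuclideanSpace.single (ι j) (1:ℝ)) = 0 := rfl
  rw [hLHS] at h0
  have hc : (-(2 * Real.pi * Complex.I)) ^ n ≠ 0 := by
    apply pow_ne_zero
    simp [Real.pi_ne_zero, Complex.I_ne_zero, Complex.ext_iff]
  have hint : ∫ x : Rd d, (∏ j, (x (ι j) : ℂ)) * ψ x = 0 := by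
    have := h0.symm
    rcases mul_eq_zero.1 this with h | h
    · exact absurd h hc
    · exact h
  have eprod : ∀ x : Rd d, (∏ j, (x (ι j) : ℂ)) = ∏ i, (x i : ℂ) ^ γ i := by
    intro x
    have e1 : (∏ j, (x (ι j) : ℂ)) = ∏ p : Σ i : Fin d, Fin (γ i), (x p.1 : ℂ) := by
      rw [hι]
      exact Equiv.prod_comp e.symm (fun p => (x p.1 : ℂ))
    rw [e1, ← Finset.univ_sigma_univ, Finset.prod_sigma]
    apply Finset.prod_congr rfl
    intro i _
    simp [Finset.prod_const]
  rw [show (fun x : Rd d => (∏ i, (x i : ℂ) ^ γ i) * ψ x)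
      = fun x : Rd d => (∏ j, (x (ι j) : ℂ)) * ψ x from funext fun x => by rw [eprod]]
  exact hint

theorem FS_fourier (φ : 𝓢(Rd d, ℂ)) (hm : momentsVanish φ) :
    FS (FourierTransform.fourier ⇑φ) := by
  have hcoe : ⇑(fourierTransformCLM ℂ φ) = FourierTransform.fourier ⇑φ := rfl
  apply FS.mk'
  · rw [← hcoe]; exact (fourierTransformCLM ℂ φ).smooth'
  · exact flat_of_moments φ hm
  · intro k n
    obtain ⟨C, hC⟩ := (fourierTransformCLM ℂ φ).decay' k n
    exact ⟨C, fun x => by rw [← hcoe]; exact hC x⟩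

theorem exists_schwartz_mul (r : ℝ) (φ : 𝓢(Rd d, ℂ)) (hm : momentsVanish φ) :
    ∃ h : 𝓢(Rd d, ℂ),
      (⇑h = fun ξ : Rd d => ((‖ξ‖ ^ r : ℝ) : ℂ) * FourierTransform.fourier ⇑φ ξ) ∧
      ∀ n, iteratedFDeriv ℝ n ⇑h 0 = 0 := by
  have hFS := masterFS r (FS_fourier φ hm)
  have hcoe : (fun x : Rd d => ‖x‖ ^ r • FourierTransform.fourier ⇑φ x)
      = fun ξ : Rd d => ((‖ξ‖ ^ r : ℝ) : ℂ) * FourierTransform.fourier ⇑φ ξ := by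
    funext ξ
    rw [Complex.real_smul]
  refine ⟨⟨fun x : Rd d => ‖x‖ ^ r • FourierTransform.fourier ⇑φ x, hFS.1, fun k n => hFS.2.2 k n⟩,
    ?_, ?_⟩
  · exact hcoe
  · exact fun n => hFS.flat n

theorem collapse_mul {g : Rd d → ℂ} (hg0 : g 0 = 0) {a b : ℝ} (hab : a + b = 0) (ha : a ≠ 0) :
    (fun ξ : Rd d => ((‖ξ‖ ^ a : ℝ) : ℂ) * (((‖ξ‖ ^ b : ℝ) : ℂ) * g ξ)) = g := by
  funext ξ
  rcases eq_or_ne ξ 0 with rfl | hξ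
  · rw [hg0, norm_zero, Real.zero_rpow ha]
    simp
  · have hnx : (0:ℝ) < ‖ξ‖ := norm_pos_iff.2 hξ
    rw [← mul_assoc, ← Complex.ofReal_mul, ← Real.rpow_add hnx, hab, Real.rpow_zero]
    simp

theorem fourierIntegral_add_smul {u v : Rd d → ℂ} (hu : Integrable u) (hv : Integrable v)
    (c : ℂ) : FourierTransform.fourier (fun x => u x + c • v x)
      = fun ξ => FourierTransform.fourier u ξ + c * FourierTransform.fourier v ξ := by
  funext ξ
  rw [Real.fourier_eq]
  have h1 : Integrable (fun x : Rd d => 𝐞 (-⟪x, ξ⟫) • u x) :=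
    (Real.fourierIntegral_convergent_iff ξ).2 hu
  have h2 : Integrable (fun x : Rd d => 𝐞 (-⟪x, ξ⟫) • v x) :=
    (Real.fourierIntegral_convergent_iff ξ).2 hv
  have key : (fun x : Rd d => 𝐞 (-⟪x, ξ⟫) • (u x + c • v x))
      = fun x : Rd d => 𝐞 (-⟪x, ξ⟫) • u x + c • (𝐞 (-⟪x, ξ⟫) • v x) := by
    funext x
    rw [smul_add, smul_comm]
  rw [key]
  have hsplit : ∫ x : Rd d, (𝐞 (-⟪x, ξ⟫) • u x + c • (𝐞 (-⟪x, ξ⟫) • v x))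
      = (∫ x : Rd d, 𝐞 (-⟪x, ξ⟫) • u x) + ∫ x : Rd d, c • (𝐞 (-⟪x, ξ⟫) • v x) :=
    integral_add h1 (h2.smul c)
  rw [hsplit, integral_smul]
  rfl

theorem fourierIntegralInv_add_smul {u v : Rd d → ℂ} (hu : Integrable u) (hv : Integrable v)
    (c : ℂ) : FourierTransformInv.fourierInv (fun ξ => u ξ + c • v ξ)
      = fun x => FourierTransformInv.fourierInv u x + c * FourierTransformInv.fourierInv v x := by
  funext x
  rw [Real.fourierInv_eq_fourier_neg,
    fourierIntegral_add_smul hu hv c]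
  rw [Real.fourierInv_eq_fourier_neg,
    Real.fourierInv_eq_fourier_neg]

theorem main_construct {d : ℕ} (r : ℝ) (hr : r ≠ 0) (φ : 𝓢(Rd d, ℂ)) (hm : momentsVanish φ) :
    ∃ ψ : 𝓢(Rd d, ℂ), momentsVanish ψ ∧
      ⇑ψ = FourierTransformInv.fourierInv
        (fun ξ => ((‖ξ‖ ^ r : ℝ) : ℂ) * FourierTransform.fourier ⇑φ ξ) ∧
      FourierTransform.fourier ⇑ψ = fun ξ => ((‖ξ‖ ^ r : ℝ) : ℂ) * FourierTransform.fourier ⇑φ ξ := by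
  obtain ⟨h, hcoe, hflat⟩ := exists_schwartz_mul r φ hm
  have hFh : FourierTransform.fourier ⇑((FourierTransform.fourierCLE ℂ 𝓢(Rd d, ℂ)).symm h) = ⇑h := by
    have h2 := FourierTransform.fourierCLE_apply (R := ℂ) (E := 𝓢(Rd d, ℂ)) ((FourierTransform.fourierCLE ℂ 𝓢(Rd d, ℂ)).symm h)
    rw [ContinuousLinearEquiv.apply_symm_apply] at h2
    exact (congrArg DFunLike.coe h2).symm
  refine ⟨(FourierTransform.fourierCLE ℂ 𝓢(Rd d, ℂ)).symm h, ?_, ?_, ?_⟩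
  · apply moments_of_flat
    intro n
    rw [hFh]
    exact hflat n
  · rw [FourierTransform.fourierCLE_symm_apply, SchwartzMap.fourierInv_coe, hcoe]
  · rw [hFh, hcoe]

theorem moment_zero {d : ℕ} (φ : 𝓢(Rd d, ℂ)) (hm : momentsVanish φ) :
    FourierTransform.fourier ⇑φ 0 = 0 := by
  rw [fourier_at_zero]
  have h := hm (fun _ => 0)
  simpa using h


/-- φ ↦ F⁻¹(|ξ|^s Fφ) is a bijective linear isomorphism of S_∞ onto
itself with inverse φ ↦ F⁻¹(|ξ|^{-s} Fφ). -/
theorem stmt_1 (d : ℕ) (s : ℝ) (hs : 0 < s) :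
    (∀ φ : 𝓢(Rd d, ℂ), momentsVanish φ →
        ∃ ψ : 𝓢(Rd d, ℂ), momentsVanish ψ ∧ ⇑ψ = fracLapFun d s φ) ∧
    (∀ φ : 𝓢(Rd d, ℂ), momentsVanish φ →
        ∃ ψ : 𝓢(Rd d, ℂ), momentsVanish ψ ∧ ⇑ψ = rieszFun d s φ) ∧
    (∀ φ : 𝓢(Rd d, ℂ), momentsVanish φ →
        rieszFun d s (fracLapFun d s φ) = ⇑φ ∧ fracLapFun d s (rieszFun d s φ) = ⇑φ) ∧
    (∀ φ ψ : 𝓢(Rd d, ℂ), momentsVanish φ → momentsVanish ψ → ∀ c : ℂ,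
        fracLapFun d s (⇑φ + c • ⇑ψ) = fracLapFun d s ⇑φ + c • fracLapFun d s ⇑ψ) := by
  have hsne : s ≠ 0 := ne_of_gt hs
  have hnsne : -s ≠ 0 := neg_ne_zero.2 hsne
  refine ⟨?_, ?_, ?_, ?_⟩
  · intro φ hm
    obtain ⟨ψ, h1, h2, _⟩ := main_construct s hsne φ hm
    exact ⟨ψ, h1, h2⟩
  · intro φ hm
    obtain ⟨ψ, h1, h2, _⟩ := main_construct (-s) hnsne φ hm
    exact ⟨ψ, h1, h2⟩
  · intro φ hm
    have hg0 : FourierTransform.fourier ⇑φ 0 = 0 := moment_zero φ hm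
    constructor
    · obtain ⟨ψ, _, h2, h3⟩ := main_construct s hsne φ hm
      have hfrac : fracLapFun d s ⇑φ = ⇑ψ := h2.symm
      rw [hfrac]
      show FourierTransformInv.fourierInv
        (fun ξ => ((‖ξ‖ ^ (-s) : ℝ) : ℂ) * FourierTransform.fourier ⇑ψ ξ) = ⇑φ
      simp only [h3]
      rw [collapse_mul hg0 (by ring) hnsne]
      exact Continuous.fourierInv_fourier_eq φ.continuous φ.integrable
        (fourierTransformCLM ℂ φ).integrable
    · obtain ⟨ψ, _, h2, h3⟩ := main_construct (-s) hnsne φ hm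
      have hfrac : rieszFun d s ⇑φ = ⇑ψ := h2.symm
      rw [hfrac]
      show FourierTransformInv.fourierInv
        (fun ξ => ((‖ξ‖ ^ s : ℝ) : ℂ) * FourierTransform.fourier ⇑ψ ξ) = ⇑φ
      simp only [h3]
      rw [collapse_mul hg0 (by ring) hsne]
      exact Continuous.fourierInv_fourier_eq φ.continuous φ.integrable
        (fourierTransformCLM ℂ φ).integrable
  · intro φ ψ hmφ hmψ c
    obtain ⟨hφS, hφcoe, _⟩ := exists_schwartz_mul s φ hmφ
    obtain ⟨hψS, hψcoe, _⟩ := exists_schwartz_mul s ψ hmψ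
    have step1 : FourierTransform.fourier (⇑φ + c • ⇑ψ)
        = fun ξ => FourierTransform.fourier ⇑φ ξ + c * FourierTransform.fourier ⇑ψ ξ :=
      fourierIntegral_add_smul φ.integrable ψ.integrable c
    have step2 : (fun ξ : Rd d => ((‖ξ‖ ^ s : ℝ) : ℂ) * FourierTransform.fourier (⇑φ + c • ⇑ψ) ξ)
        = fun ξ : Rd d => hφS ξ + c • hψS ξ := by
      funext ξ
      have h := congrFun step1 ξ
      rw [h]
      simp only [hφcoe, hψcoe, smul_eq_mul]
      ring
    have step3 : fracLapFun d s (⇑φ + c • ⇑ψ)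
        = FourierTransformInv.fourierInv (fun ξ : Rd d => hφS ξ + c • hψS ξ) :=
      congrArg FourierTransformInv.fourierInv step2
    have step4 := fourierIntegralInv_add_smul hφS.integrable hψS.integrable c
    rw [step3, step4]
    have eφ : FourierTransformInv.fourierInv ⇑hφS = fracLapFun d s ⇑φ :=
      congrArg FourierTransformInv.fourierInv hφcoe
    have eψ : FourierTransformInv.fourierInv ⇑hψS = fracLapFun d s ⇑ψ :=
      congrArg FourierTransformInv.fourierInv hψcoe
    funext x
    simp only [Pi.add_apply, Pi.smul_apply, smul_eq_mul]
    rw [eφ, eψ]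
end
end

section
/- Let 1 < p < ∞ and d/p < ν < 1 + d/p. For a ∈ ℝ^d \ {0}, the function g_a(x) = |a - x|^{ν-d} - |x|^{ν-d} belongs to L^{p'}(ℝ^d), where 1/p + 1/p' = 1, and ‖g_a‖_{L^{p'}} = C |a|^{ν - d/p} for a constant C independent of a. -/
open MeasureTheory SchwartzMap ENNReal NNReal Filter Topology
noncomputable section

section stmt5aux
open Metric Set

lemma mvt_rpow {m A B s : ℝ} (hm : 0 < m) (hA : m ≤ A) (hB : m ≤ B) (hs : s ≤ 1) :
    |A ^ s - B ^ s| ≤ |s| * m ^ (s - 1) * |A - B| := by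
  have key : ∀ x ∈ Ici m, HasDerivWithinAt (fun t : ℝ => t ^ s) (s * x ^ (s - 1)) (Ici m) x := by
    intro x hx
    exact (Real.hasDerivAt_rpow_const (Or.inl (by have h := mem_Ici.mp hx; intro h0; rw [h0] at h; linarith))).hasDerivWithinAt
  have bound : ∀ x ∈ Ici m, ‖s * x ^ (s - 1)‖ ≤ |s| * m ^ (s - 1) := by
    intro x hx
    rw [norm_mul, Real.norm_eq_abs, Real.norm_eq_abs,
      abs_of_nonneg (Real.rpow_nonneg (le_trans hm.le (mem_Ici.mp hx)) _)]
    exact mul_le_mul_of_nonneg_left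
      (Real.rpow_le_rpow_of_nonpos hm (mem_Ici.mp hx) (by linarith)) (abs_nonneg s)
  have := (convex_Ici m).norm_image_sub_le_of_norm_hasDerivWithin_le key bound
    (mem_Ici.mpr hB) (mem_Ici.mpr hA)
  simpa [Real.norm_eq_abs] using this


lemma lintegral_ball_rpow_lt_top (d : ℕ) (hd : 0 < d) {u : ℝ} (hu : -(d : ℝ) < u) {R : ℝ} (hR : 0 < R) :
    ∫⁻ x : Rd d in ball 0 R, ENNReal.ofReal (‖x‖ ^ u) < ⊤ := by
  haveI : Nonempty (Fin d) := ⟨⟨0, hd⟩⟩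
  haveI : Nontrivial (Rd d) := inferInstance
  rcases le_or_gt 0 u with hu0 | hu0
  · -- bounded case
    have hb : ∀ x : Rd d, x ∈ ball (0 : Rd d) R → ENNReal.ofReal (‖x‖ ^ u) ≤
        ENNReal.ofReal (R ^ u) := by
      intro x hx
      exact ENNReal.ofReal_le_ofReal
        (Real.rpow_le_rpow (norm_nonneg _) (mem_ball_zero_iff.mp hx).le hu0)
    calc ∫⁻ x : Rd d in ball 0 R, ENNReal.ofReal (‖x‖ ^ u)
        ≤ ∫⁻ _ in ball (0 : Rd d) R, ENNReal.ofReal (R ^ u) := setLIntegral_mono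
          (by fun_prop) hb
      _ = ENNReal.ofReal (R ^ u) * volume (ball (0 : Rd d) R) := setLIntegral_const _ _
      _ < ⊤ := ENNReal.mul_lt_top ENNReal.ofReal_lt_top measure_ball_lt_top
  · -- singular case
    set S : ℕ → Set (Rd d) := fun n =>
      {x | R * 2⁻¹ ^ (n + 1) ≤ ‖x‖} ∩ ball 0 (R * 2⁻¹ ^ n) with hS
    have hcover : ball (0 : Rd d) R ⊆ {0} ∪ ⋃ n, S n := by
      intro x hx
      rcases eq_or_ne x 0 with rfl | hx0
      · exact Or.inl rfl
      right
      have hxn : 0 < ‖x‖ := norm_pos_iff.mpr hx0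
      have hex : ∃ n : ℕ, R * 2⁻¹ ^ (n + 1) ≤ ‖x‖ := by
        obtain ⟨n, hn⟩ := exists_pow_lt_of_lt_one (div_pos hxn hR) (by norm_num : (2:ℝ)⁻¹ < 1)
        have h1 : (2:ℝ)⁻¹ ^ (n + 1) ≤ 2⁻¹ ^ n :=
          pow_le_pow_of_le_one (by norm_num) (by norm_num) (Nat.le_succ n)
        have h2 : (2:ℝ)⁻¹ ^ n * R < ‖x‖ := (lt_div_iff₀ hR).mp hn
        exact ⟨n, by nlinarith⟩
      classical
      set n₀ := Nat.find hex with hn₀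
      refine mem_iUnion.mpr ⟨n₀, Nat.find_spec hex, mem_ball_zero_iff.mpr ?_⟩
      rcases Nat.eq_zero_or_pos n₀ with h0 | hpos
      · rw [h0]; simpa using mem_ball_zero_iff.mp hx
      · obtain ⟨m, hm⟩ := Nat.exists_eq_succ_of_ne_zero hpos.ne'
        have hmin := Nat.find_min hex (m := m) (by omega)
        push_neg at hmin
        rw [hm]
        simpa using hmin
    have h2 : (0:ℝ) < 2⁻¹ := by norm_num
    set t : ℝ := 2⁻¹ with ht
    set V1 := volume (ball (0 : Rd d) 1) with hV1
    set C : ℝ := R ^ u * t ^ u * R ^ (d:ℕ) with hC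
    set w : ℝ := t ^ u * t ^ (d:ℕ) with hw
    have hw0 : 0 ≤ w := by positivity
    have hC0 : 0 ≤ C := by positivity
    have hw1 : w < 1 := by
      have : w = t ^ (u + (d:ℝ)) := by
        rw [hw, Real.rpow_add h2, Real.rpow_natCast]
      rw [this]
      exact Real.rpow_lt_one h2.le (by norm_num) (by linarith)
    have key : ∀ n : ℕ, (R * t ^ (n+1)) ^ u * (R * t ^ n) ^ (d:ℕ) = C * w ^ n := by
      intro n
      have h1 : (t ^ (n+1) : ℝ) ^ u = (t ^ u) ^ (n+1) := by
        rw [← Real.rpow_natCast t (n+1), ← Real.rpow_natCast (t^u) (n+1),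
          ← Real.rpow_mul (by norm_num), ← Real.rpow_mul (by norm_num), mul_comm]
      show (R * t ^ (n+1)) ^ u * (R * t ^ n) ^ (d:ℕ) =
        (R ^ u * t ^ u * R ^ (d:ℕ)) * (t ^ u * t ^ (d:ℕ)) ^ n
      rw [Real.mul_rpow hR.le (by positivity), h1, mul_pow, mul_pow, pow_succ]
      ring
    have hSmeas : ∀ n, MeasurableSet (S n) := fun n =>
      ((isClosed_le continuous_const continuous_norm).measurableSet).inter measurableSet_ball
    have hterm : ∀ n : ℕ, ∫⁻ x : Rd d in S n, ENNReal.ofReal (‖x‖ ^ u) ≤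
        (ENNReal.ofReal C * V1) * ENNReal.ofReal w ^ n := by
      intro n
      have hpos : (0:ℝ) < R * t ^ (n+1) := by positivity
      have step1 : ∫⁻ x : Rd d in S n, ENNReal.ofReal (‖x‖ ^ u) ≤
          ENNReal.ofReal ((R * t ^ (n+1)) ^ u) * volume (S n) := by
        calc ∫⁻ x : Rd d in S n, ENNReal.ofReal (‖x‖ ^ u)
            ≤ ∫⁻ _ in S n, ENNReal.ofReal ((R * t ^ (n+1)) ^ u) := setLIntegral_mono
              (by fun_prop) (fun x hx => ENNReal.ofReal_le_ofReal
                (Real.rpow_le_rpow_of_nonpos hpos hx.1 hu0.le))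
          _ = ENNReal.ofReal ((R * t ^ (n+1)) ^ u) * volume (S n) := setLIntegral_const _ _
      have step2 : volume (S n) ≤ ENNReal.ofReal ((R * t ^ n) ^ (d:ℕ)) * V1 := by
        calc volume (S n) ≤ volume (ball (0 : Rd d) (R * t ^ n)) :=
              measure_mono inter_subset_right
          _ = ENNReal.ofReal ((R * t ^ n) ^ Module.finrank ℝ (Rd d)) * V1 :=
              Measure.addHaar_ball volume _ (by positivity)
          _ = ENNReal.ofReal ((R * t ^ n) ^ (d:ℕ)) * V1 := by
              rw [finrank_euclideanSpace_fin]
      calc ∫⁻ x : Rd d in S n, ENNReal.ofReal (‖x‖ ^ u)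
          ≤ ENNReal.ofReal ((R * t ^ (n+1)) ^ u) *
            (ENNReal.ofReal ((R * t ^ n) ^ (d:ℕ)) * V1) := by
            refine le_trans step1 ?_
            exact mul_le_mul_right step2 _
        _ = ENNReal.ofReal ((R * t ^ (n+1)) ^ u * (R * t ^ n) ^ (d:ℕ)) * V1 := by
            rw [ENNReal.ofReal_mul (by positivity), mul_assoc]
        _ = (ENNReal.ofReal C * V1) * ENNReal.ofReal w ^ n := by
            rw [key n, ENNReal.ofReal_mul hC0, ENNReal.ofReal_pow hw0]
            ring
    calc ∫⁻ x : Rd d in ball 0 R, ENNReal.ofReal (‖x‖ ^ u)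
        ≤ ∫⁻ x : Rd d in {0} ∪ ⋃ n, S n, ENNReal.ofReal (‖x‖ ^ u) :=
          lintegral_mono_set hcover
      _ ≤ (∫⁻ x : Rd d in {(0 : Rd d)}, ENNReal.ofReal (‖x‖ ^ u)) +
          ∫⁻ x : Rd d in ⋃ n, S n, ENNReal.ofReal (‖x‖ ^ u) := lintegral_union_le _ _ _
      _ ≤ 0 + ∑' n, ∫⁻ x : Rd d in S n, ENNReal.ofReal (‖x‖ ^ u) := by
          refine add_le_add (le_of_eq ?_) (lintegral_iUnion_le _ _)
          rw [lintegral_singleton]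
          simp [Real.zero_rpow hu0.ne]
      _ ≤ 0 + ∑' n, (ENNReal.ofReal C * V1) * ENNReal.ofReal w ^ n := by
          exact add_le_add le_rfl (ENNReal.tsum_le_tsum hterm)
      _ = (ENNReal.ofReal C * V1) * ∑' n, ENNReal.ofReal w ^ n := by
          rw [zero_add, ENNReal.tsum_mul_left]
      _ < ⊤ := by
          rw [ENNReal.tsum_geometric]
          refine ENNReal.mul_lt_top (ENNReal.mul_lt_top ENNReal.ofReal_lt_top
            measure_ball_lt_top) ?_
          rw [ENNReal.inv_lt_top]
          exact tsub_pos_of_lt (by exact_mod_cast ENNReal.ofReal_lt_one.mpr hw1)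


lemma lintegral_outer_rpow_lt_top (d : ℕ) {t : ℝ} (ht : t < -(d : ℝ)) :
    ∫⁻ x : Rd d in (ball (0 : Rd d) 2)ᶜ, ENNReal.ofReal (‖x‖ ^ t) < ⊤ := by
  have hr : (Module.finrank ℝ (Rd d) : ℝ) < -t := by
    rw [finrank_euclideanSpace_fin]; linarith
  have hrpos : (0:ℝ) < -t := lt_of_le_of_lt (by positivity) hr
  have hb : ∀ x : Rd d, x ∈ (ball (0 : Rd d) 2)ᶜ →
      ENNReal.ofReal (‖x‖ ^ t) ≤ ENNReal.ofReal (2 ^ (-t) * (1 + ‖x‖) ^ (-(-t))) := by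
    intro x hx
    have hx2 : (2:ℝ) ≤ ‖x‖ := not_lt.mp (fun h => hx (mem_ball_zero_iff.mpr h))
    refine ENNReal.ofReal_le_ofReal ?_
    have h1 : (1 + ‖x‖) ≤ 2 * ‖x‖ := by linarith
    have h2 : (2 * ‖x‖) ^ (-(-t)) ≤ (1 + ‖x‖) ^ (-(-t)) :=
      Real.rpow_le_rpow_of_nonpos (by positivity) h1 (by linarith)
    calc ‖x‖ ^ t = 2 ^ (-t) * ((2:ℝ) ^ t * ‖x‖ ^ t) := by
          rw [← mul_assoc, ← Real.rpow_add (by norm_num)]; simp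
      _ = 2 ^ (-t) * (2 * ‖x‖) ^ (-(-t)) := by
          rw [neg_neg, Real.mul_rpow (by norm_num) (norm_nonneg _)]
      _ ≤ 2 ^ (-t) * (1 + ‖x‖) ^ (-(-t)) := by
          exact mul_le_mul_of_nonneg_left h2 (by positivity)
  calc ∫⁻ x : Rd d in (ball (0 : Rd d) 2)ᶜ, ENNReal.ofReal (‖x‖ ^ t)
      ≤ ∫⁻ x : Rd d in (ball (0 : Rd d) 2)ᶜ,
          ENNReal.ofReal (2 ^ (-t) * (1 + ‖x‖) ^ (-(-t))) := setLIntegral_mono (by fun_prop) hb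
    _ ≤ ∫⁻ x : Rd d, ENNReal.ofReal (2 ^ (-t) * (1 + ‖x‖) ^ (-(-t))) :=
        setLIntegral_le_lintegral _ _
    _ = ENNReal.ofReal (2 ^ (-t)) * ∫⁻ x : Rd d, ENNReal.ofReal ((1 + ‖x‖) ^ (-(-t))) := by
        simp_rw [ENNReal.ofReal_mul (by positivity : (0:ℝ) ≤ (2:ℝ) ^ (-t))]
        exact lintegral_const_mul' _ _ ENNReal.ofReal_ne_top
    _ < ⊤ := ENNReal.mul_lt_top ENNReal.ofReal_lt_top (finite_integral_one_add_norm hr)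



lemma enn_add_rpow_le (a b : ℝ≥0∞) {q : ℝ} (hq : 0 ≤ q) :
    (a + b) ^ q ≤ 2 ^ q * (a ^ q + b ^ q) := by
  calc (a + b) ^ q ≤ (2 * max a b) ^ q := by
        refine ENNReal.rpow_le_rpow ?_ hq
        rw [two_mul]
        exact add_le_add (le_max_left a b) (le_max_right a b)
    _ = 2 ^ q * (max a b) ^ q := ENNReal.mul_rpow_of_nonneg _ _ hq
    _ ≤ 2 ^ q * (a ^ q + b ^ q) := by
        refine mul_le_mul_right ?_ _
        rcases max_cases a b with ⟨h, _⟩ | ⟨h, _⟩ <;> rw [h]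
        · exact le_self_add
        · exact le_add_self

section main
variable {d : ℕ} {q ν : ℝ}

lemma lintegral_gFun_unit_lt_top (hd : 0 < d) (hq0 : 0 < q)
    (hu : -(d:ℝ) < (ν - d) * q) (htq : (ν - d - 1) * q < -(d:ℝ)) (hs1 : ν - (d:ℝ) ≤ 1)
    (e : Rd d) (he : ‖e‖ = 1) (hA : ∀ (R : ℝ), 0 < R →
      ∫⁻ x : Rd d in ball 0 R, ENNReal.ofReal (‖x‖ ^ ((ν - d) * q)) < ⊤)
    (hB : ∫⁻ x : Rd d in (ball (0 : Rd d) 2)ᶜ, ENNReal.ofReal (‖x‖ ^ ((ν - d - 1) * q)) < ⊤) :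
    ∫⁻ x : Rd d, (‖gFun d ν e x‖₊ : ℝ≥0∞) ^ q < ⊤ := by
  set s : ℝ := ν - d with hs
  rw [← lintegral_add_compl (f := fun x => (‖gFun d ν e x‖₊ : ℝ≥0∞) ^ q)
    (measurableSet_ball (x := (0 : Rd d)) (ε := 2))]
  have h2q : (2 : ℝ≥0∞) ^ q ≠ ⊤ := (ENNReal.rpow_lt_top_of_nonneg hq0.le (by norm_num)).ne
  refine ENNReal.add_lt_top.mpr ⟨?_, ?_⟩
  · -- ball part
    have hpt : ∀ x : Rd d, (‖gFun d ν e x‖₊ : ℝ≥0∞) ^ q ≤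
        2 ^ q * (ENNReal.ofReal (‖e - x‖ ^ (s * q)) + ENNReal.ofReal (‖x‖ ^ (s * q))) := by
      intro x
      have h1 : (‖gFun d ν e x‖₊ : ℝ≥0∞) = ENNReal.ofReal |gFun d ν e x| :=
        Real.enorm_eq_ofReal_abs _
      have h2 : |gFun d ν e x| ≤ ‖e - x‖ ^ s + ‖x‖ ^ s := by
        refine (abs_sub _ _).trans ?_
        rw [abs_of_nonneg (Real.rpow_nonneg (norm_nonneg _) _),
          abs_of_nonneg (Real.rpow_nonneg (norm_nonneg _) _)]
      calc (‖gFun d ν e x‖₊ : ℝ≥0∞) ^ q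
          ≤ (ENNReal.ofReal (‖e - x‖ ^ s) + ENNReal.ofReal (‖x‖ ^ s)) ^ q := by
            refine ENNReal.rpow_le_rpow ?_ hq0.le
            rw [h1, ← ENNReal.ofReal_add (by positivity) (by positivity)]
            exact ENNReal.ofReal_le_ofReal h2
        _ ≤ 2 ^ q * (ENNReal.ofReal (‖e - x‖ ^ s) ^ q + ENNReal.ofReal (‖x‖ ^ s) ^ q) :=
            enn_add_rpow_le _ _ hq0.le
        _ = 2 ^ q * (ENNReal.ofReal (‖e - x‖ ^ (s * q)) + ENNReal.ofReal (‖x‖ ^ (s * q))) := by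
            rw [ENNReal.ofReal_rpow_of_nonneg (by positivity) hq0.le,
              ENNReal.ofReal_rpow_of_nonneg (by positivity) hq0.le,
              ← Real.rpow_mul (norm_nonneg _), ← Real.rpow_mul (norm_nonneg _)]
    have hshift : ∫⁻ x : Rd d in ball 0 2, ENNReal.ofReal (‖e - x‖ ^ (s * q)) < ⊤ := by
      have hmp : MeasurePreserving (fun x : Rd d => e + (-x)) volume volume :=
        (measurePreserving_add_left volume e).comp (Measure.measurePreserving_neg volume)
      have hemb : MeasurableEmbedding (fun x : Rd d => e + (-x)) :=
        ((MeasurableEquiv.neg (Rd d)).trans (MeasurableEquiv.addLeft e)).measurableEmbedding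
      have hsub : ball (0 : Rd d) 2 ⊆ (fun x : Rd d => e + (-x)) ⁻¹' (ball 0 3) := by
        intro x hx
        have := mem_ball_zero_iff.mp hx
        simp only [mem_preimage, mem_ball_zero_iff]
        calc ‖e + (-x)‖ ≤ ‖e‖ + ‖x‖ := by simpa using norm_add_le e (-x)
          _ < 3 := by rw [he]; linarith
      calc ∫⁻ x : Rd d in ball 0 2, ENNReal.ofReal (‖e - x‖ ^ (s * q))
          = ∫⁻ x : Rd d in ball 0 2, ENNReal.ofReal (‖e + (-x)‖ ^ (s * q)) := by
            simp_rw [sub_eq_add_neg]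
        _ ≤ ∫⁻ x : Rd d in (fun x : Rd d => e + (-x)) ⁻¹' (ball 0 3),
            ENNReal.ofReal (‖e + (-x)‖ ^ (s * q)) := lintegral_mono_set hsub
        _ = ∫⁻ y : Rd d in ball 0 3, ENNReal.ofReal (‖y‖ ^ (s * q)) :=
            hmp.setLIntegral_comp_preimage_emb hemb
              (fun y => ENNReal.ofReal (‖y‖ ^ (s * q))) (ball 0 3)
        _ < ⊤ := hA 3 (by norm_num)
    calc ∫⁻ x : Rd d in ball 0 2, (‖gFun d ν e x‖₊ : ℝ≥0∞) ^ q
        ≤ ∫⁻ x : Rd d in ball 0 2, 2 ^ q *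
            (ENNReal.ofReal (‖e - x‖ ^ (s * q)) + ENNReal.ofReal (‖x‖ ^ (s * q))) :=
          lintegral_mono fun x => hpt x
      _ = 2 ^ q * ((∫⁻ x : Rd d in ball 0 2, ENNReal.ofReal (‖e - x‖ ^ (s * q))) +
            ∫⁻ x : Rd d in ball 0 2, ENNReal.ofReal (‖x‖ ^ (s * q))) := by
          rw [lintegral_const_mul' _ _ h2q, lintegral_add_left (by fun_prop)]
      _ < ⊤ := ENNReal.mul_lt_top h2q.lt_top
          (ENNReal.add_lt_top.mpr ⟨hshift, hA 2 (by norm_num)⟩)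
  · -- outer part
    set K : ℝ := |s| * 2 ^ (1 - s) with hK
    have hKpos : 0 ≤ K := by positivity
    have hpt : ∀ x : Rd d, x ∈ (ball (0 : Rd d) 2)ᶜ → (‖gFun d ν e x‖₊ : ℝ≥0∞) ^ q ≤
        ENNReal.ofReal (K ^ q) * ENNReal.ofReal (‖x‖ ^ ((s - 1) * q)) := by
      intro x hx
      have hx2 : (2:ℝ) ≤ ‖x‖ := not_lt.mp (fun h => hx (mem_ball_zero_iff.mpr h))
      have hm : (0:ℝ) < ‖x‖ / 2 := by linarith
      have habs : |‖e - x‖ - ‖x‖| ≤ 1 := by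
        have h := abs_norm_sub_norm_le (e - x) (-x)
        rw [show (e - x) - -x = e from by abel, he, norm_neg] at h
        exact h
      have hmA : ‖x‖ / 2 ≤ ‖e - x‖ := by
        have h3 := (abs_le.mp habs).1
        linarith
      have hmvt : |gFun d ν e x| ≤ |s| * (‖x‖ / 2) ^ (s - 1) * 1 := by
        have h4 := mvt_rpow hm hmA (by linarith : ‖x‖ / 2 ≤ ‖x‖) hs1
        exact h4.trans (mul_le_mul_of_nonneg_left habs (by positivity))
      have hKb : |gFun d ν e x| ≤ K * ‖x‖ ^ (s - 1) := by
        rw [mul_one] at hmvt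
        refine hmvt.trans ?_
        have h2s : (2:ℝ) ^ (1 - s) = ((2:ℝ) ^ (s - 1))⁻¹ := by
          rw [← Real.rpow_neg (by norm_num), neg_sub]
        rw [Real.div_rpow (norm_nonneg _) (by norm_num), hK, h2s]
        exact le_of_eq (by ring)
      calc (‖gFun d ν e x‖₊ : ℝ≥0∞) ^ q
          ≤ ENNReal.ofReal (K * ‖x‖ ^ (s - 1)) ^ q := by
            rw [← enorm_eq_nnnorm, Real.enorm_eq_ofReal_abs]
            exact ENNReal.rpow_le_rpow (ENNReal.ofReal_le_ofReal hKb) hq0.le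
        _ = ENNReal.ofReal (K ^ q) * ENNReal.ofReal (‖x‖ ^ ((s - 1) * q)) := by
            rw [ENNReal.ofReal_rpow_of_nonneg (by positivity) hq0.le,
              Real.mul_rpow hKpos (by positivity), ← Real.rpow_mul (norm_nonneg _),
              ENNReal.ofReal_mul (by positivity)]
    calc ∫⁻ x : Rd d in (ball (0 : Rd d) 2)ᶜ, (‖gFun d ν e x‖₊ : ℝ≥0∞) ^ q
        ≤ ∫⁻ x : Rd d in (ball (0 : Rd d) 2)ᶜ,
            ENNReal.ofReal (K ^ q) * ENNReal.ofReal (‖x‖ ^ ((s - 1) * q)) :=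
          setLIntegral_mono (by fun_prop) hpt
      _ = ENNReal.ofReal (K ^ q) *
            ∫⁻ x : Rd d in (ball (0 : Rd d) 2)ᶜ, ENNReal.ofReal (‖x‖ ^ ((s - 1) * q)) :=
          lintegral_const_mul' _ _ ENNReal.ofReal_ne_top
      _ < ⊤ := by
          refine ENNReal.mul_lt_top ENNReal.ofReal_lt_top ?_
          have : ν - (d:ℝ) - 1 = s - 1 := by rw [hs]
          rw [← this]
          exact hB
end main


lemma lintegral_gFun_scale (d : ℕ) (q ν : ℝ) (hq0 : 0 < q)
    (e : Rd d) (he : ‖e‖ = 1) (a : Rd d) (ha : a ≠ 0) :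
    ∫⁻ x : Rd d, (‖gFun d ν a x‖₊ : ℝ≥0∞) ^ q =
      ENNReal.ofReal (‖a‖ ^ ((d : ℝ) + (ν - d) * q)) *
        ∫⁻ x : Rd d, (‖gFun d ν e x‖₊ : ℝ≥0∞) ^ q := by
  set s : ℝ := ν - d with hs
  set c : ℝ := ‖a‖ with hcdef
  have hc : 0 < c := norm_pos_iff.mpr ha
  have hnorm : ‖c⁻¹ • a‖ = 1 := by
    rw [norm_smul, norm_inv, Real.norm_eq_abs, abs_of_pos hc, ← hcdef, inv_mul_cancel₀ hc.ne']
  set R := Submodule.reflection (ℝ ∙ (e - c⁻¹ • a))ᗮ with hR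
  have hRe : R e = c⁻¹ • a := Submodule.reflection_sub (by rw [he, hnorm])
  have key : ∀ y : Rd d, gFun d ν a (c • R y) = c ^ s * gFun d ν e y := by
    intro y
    have h1 : ‖a - c • R y‖ = c * ‖e - y‖ := by
      have h0 : a - c • R y = c • R (e - y) := by
        rw [map_sub, smul_sub, hRe, smul_smul, mul_inv_cancel₀ hc.ne', one_smul]
      rw [h0, norm_smul, R.norm_map, Real.norm_eq_abs, abs_of_pos hc]
    have h2 : ‖c • R y‖ = c * ‖y‖ := by
      rw [norm_smul, R.norm_map, Real.norm_eq_abs, abs_of_pos hc]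
    unfold gFun
    rw [h1, h2, Real.mul_rpow hc.le (norm_nonneg _), Real.mul_rpow hc.le (norm_nonneg _), ← hs]
    ring
  have hgmeas : ∀ b : Rd d, Measurable fun x : Rd d => (‖gFun d ν b x‖₊ : ℝ≥0∞) ^ q := by
    intro b
    have : Measurable (gFun d ν b) := by unfold gFun; fun_prop
    fun_prop
  have hφmeas : Measurable fun y : Rd d => c • R y :=
    (measurable_const_smul c).comp R.continuous.measurable
  have hmap : Measure.map (fun y : Rd d => c • R y) volume =
      ENNReal.ofReal ((c ^ d)⁻¹) • volume := by
    have hcomp : (fun y : Rd d => c • R y) = (fun x : Rd d => c • x) ∘ ⇑R := rfl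
    rw [hcomp, ← Measure.map_map (measurable_const_smul c) R.continuous.measurable,
      R.measurePreserving.map_eq]
    have := Measure.map_addHaar_smul (volume : Measure (Rd d)) hc.ne'
    rw [this, finrank_euclideanSpace_fin, abs_of_pos (by positivity)]
  have hchange : ∫⁻ y : Rd d, (‖gFun d ν a (c • R y)‖₊ : ℝ≥0∞) ^ q =
      ENNReal.ofReal ((c ^ d)⁻¹) * ∫⁻ x : Rd d, (‖gFun d ν a x‖₊ : ℝ≥0∞) ^ q := by
    rw [← lintegral_map (hgmeas a) hφmeas, hmap, lintegral_smul_measure, smul_eq_mul]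
  have hlhs : ∫⁻ y : Rd d, (‖gFun d ν a (c • R y)‖₊ : ℝ≥0∞) ^ q =
      ENNReal.ofReal (c ^ (s * q)) * ∫⁻ y : Rd d, (‖gFun d ν e y‖₊ : ℝ≥0∞) ^ q := by
    rw [← lintegral_const_mul' _ _ ENNReal.ofReal_ne_top]
    congr 1
    ext y
    rw [key y, ← enorm_eq_nnnorm, Real.enorm_eq_ofReal_abs, ← enorm_eq_nnnorm, Real.enorm_eq_ofReal_abs, abs_mul,
      abs_of_nonneg (Real.rpow_nonneg hc.le _),
      ENNReal.ofReal_mul (Real.rpow_nonneg hc.le _),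
      ENNReal.mul_rpow_of_nonneg _ _ hq0.le,
      ENNReal.ofReal_rpow_of_nonneg (Real.rpow_nonneg hc.le _) hq0.le,
      ← Real.rpow_mul hc.le]
  have hcd : ENNReal.ofReal ((c ^ d)⁻¹) = (ENNReal.ofReal (c ^ d))⁻¹ :=
    ENNReal.ofReal_inv_of_pos (by positivity)
  have hne0 : ENNReal.ofReal (c ^ d) ≠ 0 := by
    simp only [ne_eq, ENNReal.ofReal_eq_zero, not_le]
    positivity
  calc ∫⁻ x : Rd d, (‖gFun d ν a x‖₊ : ℝ≥0∞) ^ q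
      = ENNReal.ofReal (c ^ d) * (ENNReal.ofReal ((c ^ d)⁻¹) *
          ∫⁻ x : Rd d, (‖gFun d ν a x‖₊ : ℝ≥0∞) ^ q) := by
        rw [hcd, ← mul_assoc, ENNReal.mul_inv_cancel hne0 ENNReal.ofReal_ne_top, one_mul]
    _ = ENNReal.ofReal (c ^ d) * (ENNReal.ofReal (c ^ (s * q)) *
          ∫⁻ y : Rd d, (‖gFun d ν e y‖₊ : ℝ≥0∞) ^ q) := by rw [← hchange, hlhs]
    _ = ENNReal.ofReal (c ^ ((d : ℝ) + s * q)) *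
          ∫⁻ x : Rd d, (‖gFun d ν e x‖₊ : ℝ≥0∞) ^ q := by
        rw [← mul_assoc, ← ENNReal.ofReal_mul (by positivity), ← Real.rpow_natCast c d,
          ← Real.rpow_add hc]

end stmt5aux

/-- for d/p < ν < 1+d/p and a ≠ 0, g_a ∈ L^{p'} with
‖g_a‖_{L^{p'}} = C |a|^{ν-d/p}, C independent of a. -/
theorem stmt_5 (d : ℕ) (hd : 0 < d) (p q ν : ℝ) (hp : 1 < p) (hq : 1 / p + 1 / q = 1)
    (hν1 : (d : ℝ) / p < ν) (hν2 : ν < 1 + (d : ℝ) / p) :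
    ∃ C : ℝ, 0 ≤ C ∧ ∀ a : Rd d, a ≠ 0 →
      MemLp (gFun d ν a) (ENNReal.ofReal q) volume ∧
      (eLpNorm (gFun d ν a) (ENNReal.ofReal q) volume).toReal =
        C * ‖a‖ ^ (ν - (d : ℝ) / p) := by
  classical
  set e : Rd d := EuclideanSpace.single (⟨0, hd⟩ : Fin d) (1 : ℝ) with hedef
  have he : ‖e‖ = 1 := by
    rw [hedef, EuclideanSpace.norm_single]
    norm_num
  have hp0 : (0:ℝ) < p := lt_trans one_pos hp
  have hq0 : (0:ℝ) < q := by
    rcases lt_trichotomy q 0 with h | h | h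
    · have h1 : 1/q < 0 := by exact div_neg_of_pos_of_neg one_pos h
      have h2 : 1/p < 1 := by rw [div_lt_one hp0]; exact hp
      linarith
    · rw [h] at hq; simp at hq
      have : 1/p < 1 := by rw [div_lt_one hp0]; exact hp
      linarith
    · exact h
  have hdpq : (d:ℝ)/p = d - d/q := by
    have h1 : (1:ℝ)/p = 1 - 1/q := by linarith
    calc (d:ℝ)/p = d * (1/p) := by ring
      _ = d * (1 - 1/q) := by rw [h1]
      _ = d - d/q := by ring
  set s : ℝ := ν - d with hsdef
  have hu : -(d:ℝ) < s * q := by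
    have h1 : -((d:ℝ)/q) < s := by
      rw [hsdef]
      have : (d:ℝ)/p = d - d/q := hdpq
      linarith
    have h2 : (-((d:ℝ)/q)) * q = -(d:ℝ) := by field_simp
    calc -(d:ℝ) = (-((d:ℝ)/q)) * q := h2.symm
      _ < s * q := by exact mul_lt_mul_of_pos_right h1 hq0
  have htq : (s - 1) * q < -(d:ℝ) := by
    have h1 : s - 1 < -((d:ℝ)/q) := by
      rw [hsdef]
      have : (d:ℝ)/p = d - d/q := hdpq
      linarith
    have h2 : (-((d:ℝ)/q)) * q = -(d:ℝ) := by field_simp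
    calc (s - 1) * q < (-((d:ℝ)/q)) * q := mul_lt_mul_of_pos_right h1 hq0
      _ = -(d:ℝ) := h2
  have hs1 : s ≤ 1 := by
    have hdp : (d:ℝ)/p ≤ d := div_le_self (Nat.cast_nonneg d) hp.le
    rw [hsdef]; linarith
  have hqne0 : ENNReal.ofReal q ≠ 0 := by
    simp only [ne_eq, ENNReal.ofReal_eq_zero, not_le]; exact hq0
  have hqnetop : ENNReal.ofReal q ≠ ⊤ := ENNReal.ofReal_ne_top
  have hqtoReal : (ENNReal.ofReal q).toReal = q := ENNReal.toReal_ofReal hq0.le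
  have hgmeas : ∀ b : Rd d, Measurable (gFun d ν b) := by
    intro b; unfold gFun; fun_prop
  have hIe : ∫⁻ x : Rd d, (‖gFun d ν e x‖₊ : ℝ≥0∞) ^ q < ⊤ := by
    refine lintegral_gFun_unit_lt_top hd hq0 ?_ ?_ hs1 e he ?_ ?_
    · exact hu
    · exact htq
    · intro R hR
      exact lintegral_ball_rpow_lt_top d hd hu hR
    · exact lintegral_outer_rpow_lt_top d htq
  have hEe : eLpNorm (gFun d ν e) (ENNReal.ofReal q) volume =
      (∫⁻ x : Rd d, (‖gFun d ν e x‖₊ : ℝ≥0∞) ^ q) ^ (1/q) := by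
    simp_rw [← enorm_eq_nnnorm]
    rw [eLpNorm_eq_lintegral_rpow_enorm_toReal hqne0 hqnetop, hqtoReal]
  have hEelt : eLpNorm (gFun d ν e) (ENNReal.ofReal q) volume < ⊤ := by
    rw [hEe]
    exact ENNReal.rpow_lt_top_of_nonneg (by positivity) hIe.ne
  refine ⟨(eLpNorm (gFun d ν e) (ENNReal.ofReal q) volume).toReal, ENNReal.toReal_nonneg,
    fun a ha => ?_⟩
  have hc : (0:ℝ) < ‖a‖ := norm_pos_iff.mpr ha
  have hexp : ((d:ℝ) + (ν - d) * q) * (1/q) = ν - (d:ℝ)/p := by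
    rw [hdpq]
    field_simp
    ring
  have hEa : eLpNorm (gFun d ν a) (ENNReal.ofReal q) volume =
      ENNReal.ofReal (‖a‖ ^ (ν - (d:ℝ)/p)) *
        eLpNorm (gFun d ν e) (ENNReal.ofReal q) volume := by
    rw [eLpNorm_eq_lintegral_rpow_enorm_toReal hqne0 hqnetop, hqtoReal]
    simp_rw [enorm_eq_nnnorm]
    rw [lintegral_gFun_scale d q ν hq0 e he a ha,
      ENNReal.mul_rpow_of_nonneg _ _ (by positivity : (0:ℝ) ≤ 1/q),
      ENNReal.ofReal_rpow_of_nonneg (Real.rpow_nonneg hc.le _) (by positivity : (0:ℝ) ≤ 1/q),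
      ← Real.rpow_mul hc.le, hexp, hEe]
  constructor
  · refine ⟨(hgmeas a).aestronglyMeasurable, ?_⟩
    rw [hEa]
    exact ENNReal.mul_lt_top ENNReal.ofReal_lt_top hEelt
  · rw [hEa, ENNReal.toReal_mul, ENNReal.toReal_ofReal (Real.rpow_nonneg hc.le _)]
    ring
end
end
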